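/- Let P be a poset with the property that every nonempty subset has a maximal element (ascending chain condition, e.g., a finite poset), let 𝒜 be an abelian category, and let F : P → 𝒜 be an injective object in the functor category Fun(P, 𝒜) ≔ functors from P (viewed as a category) to 𝒜, where P is moreover a lattice. Then F sends every morphism of P to an epimorphism. -/

import Mathlib

open CategoryTheory Limits
open scoped ZeroObject

noncomputable section StepAux

variable {P : Type*} [Preorder P] {𝒜 : Type*} [Category 𝒜] [Abelian 𝒜]

open Classical in
/-- The functor that is `A` on the upper set of `x` and `0` elsewhere. -/
@[reducible]
def stepF (x : P) (A : 𝒜) : P ⥤ 𝒜 where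
  obj p := if x ≤ p then A else 0
  map {p q} f :=
    if h : x ≤ p then eqToHom (if_pos h) ≫ eqToHom (if_pos (h.trans f.le)).symm
    else 0
  map_id p := by
    by_cases h : x ≤ p
    · simp [dif_pos h]
    · exact (IsZero.of_iso (isZero_zero 𝒜) (eqToIso (if_neg h))).eq_of_src _ _
  map_comp {p q r} f g := by
    by_cases h : x ≤ p
    · simp [dif_pos h, dif_pos (h.trans f.le)]
    · exact (IsZero.of_iso (isZero_zero 𝒜) (eqToIso (if_neg h))).eq_of_src _ _

open Classical in
/-- The inclusion `stepF y A ⟶ stepF x A` for `x ≤ y`. -/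
def stepIncl {x y : P} (hxy : x ≤ y) (A : 𝒜) : stepF y A ⟶ stepF x A where
  app p := if h : y ≤ p then eqToHom (if_pos h) ≫ eqToHom (if_pos (hxy.trans h)).symm else 0
  naturality p q f := by
    by_cases h : y ≤ p
    · simp [stepF, dif_pos h, dif_pos (h.trans f.le), dif_pos (hxy.trans h),
        dif_pos ((hxy.trans h).trans f.le)]
    · exact (IsZero.of_iso (isZero_zero 𝒜) (eqToIso (if_neg h))).eq_of_src _ _

open Classical in
/-- A map `A ⟶ F.obj x` induces a natural transformation `stepF x A ⟶ F`. -/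
def toStep {x : P} {A : 𝒜} (F : P ⥤ 𝒜) (g : A ⟶ F.obj x) : stepF x A ⟶ F where
  app p := if h : x ≤ p then eqToHom (if_pos h) ≫ g ≫ F.map (homOfLE h) else 0
  naturality p q f := by
    by_cases h : x ≤ p
    · simp only [stepF, dif_pos h, dif_pos (h.trans f.le), Category.assoc,
        eqToHom_trans, eqToHom_trans_assoc, eqToHom_refl, Category.id_comp]
      rw [← F.map_comp]
      congr 1
    · exact (IsZero.of_iso (isZero_zero 𝒜) (eqToIso (if_neg h))).eq_of_src _ _

end StepAux

/-- Let `P` be a lattice in which every nonempty subset has a maximal element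
(the ascending chain condition), and `𝒜` an abelian category. If `F : P ⥤ 𝒜` is an
injective object of the functor category `Fun(P, 𝒜)`, then `F` sends every
morphism of `P` to an epimorphism. -/
theorem injective_functor_epimorphic {P : Type*} [Lattice P]
    (hacc : ∀ S : Set P, S.Nonempty → ∃ m ∈ S, ∀ x ∈ S, ¬m < x)
    {𝒜 : Type*} [Category 𝒜] [Abelian 𝒜]
    (F : P ⥤ 𝒜) (hF : Injective F) :
    ∀ {x y : P} (h : x ≤ y), Epi (F.map (homOfLE h)) := by
  intro x y h
  classical
  set A := F.obj y with hA
  haveI : ∀ p, Mono ((stepIncl h A).app p) := by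
    intro p
    by_cases hp : y ≤ p
    · simp only [stepIncl, dif_pos hp]
      infer_instance
    · refine ⟨fun {Z} a b _ => ?_⟩
      exact (IsZero.of_iso (isZero_zero 𝒜) (eqToIso (if_neg hp))).eq_of_tgt a b
  haveI : Mono (stepIncl h A) := NatTrans.mono_of_mono_app _
  obtain ⟨ψ, hψ⟩ := hF.factors (toStep F (𝟙 A)) (stepIncl h A)
  -- evaluate the factorization at `y`
  have hy : (stepIncl h A).app y ≫ ψ.app y = (toStep F (𝟙 A)).app y :=
    congrArg (fun η => NatTrans.app η y) hψ
  simp only [stepIncl, toStep, dif_pos (le_refl y)] at hy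
  -- naturality of ψ
  have hnat := ψ.naturality (homOfLE h)
  simp only [stepF, dif_pos (le_refl x)] at hnat
  set g : F.obj y ⟶ F.obj x := eqToHom (if_pos (le_refl x)).symm ≫ ψ.app x with hg
  have key : g ≫ F.map (homOfLE h) = 𝟙 (F.obj y) := by
    rw [hg, Category.assoc, ← hnat]
    have : eqToHom (if_pos h).symm ≫ ψ.app y = 𝟙 A := by
      have := hy
      rw [Category.assoc] at this
      calc eqToHom (if_pos h).symm ≫ ψ.app y
          = eqToHom (if_pos (le_refl y)).symm ≫
            (eqToHom (if_pos (le_refl y)) ≫ eqToHom (if_pos h).symm ≫ ψ.app y) := by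
            simp
        _ = eqToHom (if_pos (le_refl y)).symm ≫
            (eqToHom (if_pos (le_refl y)) ≫ 𝟙 A ≫ F.map (homOfLE (le_refl y))) := by
            rw [this]
        _ = 𝟙 A := by simp; rfl
    calc eqToHom (if_pos (le_refl x)).symm ≫
          (eqToHom (if_pos (le_refl x)) ≫ eqToHom (if_pos h).symm) ≫ ψ.app y
        = eqToHom (if_pos h).symm ≫ ψ.app y := by simp
      _ = 𝟙 A := this
  have : Epi (g ≫ F.map (homOfLE h)) := by rw [key]; infer_instance
  exact epi_of_epi g (F.map (homOfLE h))
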